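/- Let f : ℝ² → ℝ be any polynomial function. Then the infimum over all (x,y) ∈ ℝ² of the quantity Δ² = [((1+f_y²)·f_xx − 2·f_x·f_y·f_xy + (1+f_x²)·f_yy)² − 4·(1+f_x²+f_y²)·(f_xx·f_yy − f_xy²)] / (1+f_x²+f_y²)³, which equals the square (κ₁ − κ₂)² of the difference of the principal curvatures of the graph z = f(x,y), is equal to 0. In other words, Toponogov's condition inf |κ₁ − κ₂| = 0 holds for every polynomial graph. -/

import Mathlib

open MvPolynomial Real Filter

/-- Evaluate a bivariate polynomial at `(x, y)`. -/
noncomputable def ev (p : MvPolynomial (Fin 2) ℝ) (x y : ℝ) : ℝ :=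
  eval ![x, y] p

/-- Formal partial derivative in the first variable. -/
noncomputable def Dx (p : MvPolynomial (Fin 2) ℝ) : MvPolynomial (Fin 2) ℝ :=
  pderiv (0 : Fin 2) p

/-- Formal partial derivative in the second variable. -/
noncomputable def Dy (p : MvPolynomial (Fin 2) ℝ) : MvPolynomial (Fin 2) ℝ :=
  pderiv (1 : Fin 2) p

/-- The square `(κ₁ − κ₂)²` of the difference of the principal curvatures of the
graph `z = f(x,y)` at `(x,y)`, for `f` the polynomial function determined by `p`. -/
noncomputable def Delta2 (p : MvPolynomial (Fin 2) ℝ) (x y : ℝ) : ℝ :=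
  (((1 + ev (Dy p) x y ^ 2) * ev (Dx (Dx p)) x y
      - 2 * ev (Dx p) x y * ev (Dy p) x y * ev (Dy (Dx p)) x y
      + (1 + ev (Dx p) x y ^ 2) * ev (Dy (Dy p)) x y) ^ 2
    - 4 * (1 + ev (Dx p) x y ^ 2 + ev (Dy p) x y ^ 2)
        * (ev (Dx (Dx p)) x y * ev (Dy (Dy p)) x y - ev (Dy (Dx p)) x y ^ 2))
  / (1 + ev (Dx p) x y ^ 2 + ev (Dy p) x y ^ 2) ^ 3

/-- `W = √(1 + f_x² + f_y²)`. -/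
noncomputable def Wgr (p : MvPolynomial (Fin 2) ℝ) (x y : ℝ) : ℝ :=
  Real.sqrt (1 + ev (Dx p) x y ^ 2 + ev (Dy p) x y ^ 2)

/-- The distance to infinity `d = 1 − √((W−1)/(W+1)) = 1 − |ξ|` of the point `(x,y)`
under the Gauss map of the graph `z = f(x,y)`. -/
noncomputable def dInf (p : MvPolynomial (Fin 2) ℝ) (x y : ℝ) : ℝ :=
  1 - Real.sqrt ((Wgr p x y - 1) / (Wgr p x y + 1))

section Aux

lemma sum_two (e : Fin 2 →₀ ℕ) : (e.sum fun _ k => k) = e 0 + e 1 := by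
  rw [Finsupp.sum, Finset.sum_subset (Finset.subset_univ _), Fin.sum_univ_two]
  intro i _ hi
  exact Finsupp.notMem_support_iff.mp hi

lemma degree_two (e : Fin 2 →₀ ℕ) : e.degree = e 0 + e 1 := by
  rw [show e.degree = ∑ i ∈ e.support, e i from rfl, Finset.sum_subset (Finset.subset_univ _), Fin.sum_univ_two]
  intro i _ hi
  exact Finsupp.notMem_support_iff.mp hi

lemma coeff_pderiv (i : Fin 2) (m : Fin 2 →₀ ℕ) (q : MvPolynomial (Fin 2) ℝ) :
    coeff m (pderiv i q) = ((m i : ℝ) + 1) * coeff (m + Finsupp.single i 1) q := by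
  conv_lhs => rw [q.as_sum]
  rw [map_sum, MvPolynomial.coeff_sum]
  simp only [pderiv_monomial, coeff_monomial]
  rw [Finset.sum_eq_single (m + Finsupp.single i 1)]
  · rw [if_pos (by rw [add_tsub_cancel_right])]
    simp [mul_comm]
  · intro e _ hne
    split_ifs with h
    · rcases Nat.eq_zero_or_pos (e i) with h0 | h0
      · simp [h0]
      · exfalso
        apply hne
        ext j
        have := congrArg (fun f => f j) h
        simp only [Finsupp.tsub_apply] at this
        rw [Finsupp.add_apply]
        by_cases hj : j = i
        · subst hj
          rw [Finsupp.single_eq_same] at this ⊢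
          omega
        · rw [Finsupp.single_eq_of_ne hj] at this ⊢
          omega
    · rfl
  · intro h
    rw [MvPolynomial.notMem_support_iff.mp h]
    simp

lemma totalDegree_pderiv_le (i : Fin 2) (q : MvPolynomial (Fin 2) ℝ) (n : ℕ)
    (h : q.totalDegree ≤ n + 1) : (pderiv i q).totalDegree ≤ n := by
  rw [MvPolynomial.totalDegree]
  apply Finset.sup_le
  intro e he
  have hne : coeff e (pderiv i q) ≠ 0 := MvPolynomial.mem_support_iff.mp he
  rw [coeff_pderiv] at hne
  have h2 : coeff (e + Finsupp.single i 1) q ≠ 0 := by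
    intro h0; rw [h0, mul_zero] at hne; exact hne rfl
  have h3 := MvPolynomial.le_totalDegree (MvPolynomial.mem_support_iff.mpr h2)
  have h4 : ((e + Finsupp.single i 1).sum fun _ k => k) = (e.sum fun _ k => k) + 1 := by
    rw [sum_two, sum_two]
    fin_cases i <;> simp [Finsupp.add_apply, Finsupp.single_apply] <;> omega
  omega

lemma pderiv_eq_zero_of_td (i : Fin 2) (q : MvPolynomial (Fin 2) ℝ)
    (h : q.totalDegree = 0) : pderiv i q = 0 := by
  ext m
  rw [coeff_pderiv, MvPolynomial.coeff_zero]
  have : coeff (m + Finsupp.single i 1) q = 0 := by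
    by_contra hc
    have := MvPolynomial.le_totalDegree (MvPolynomial.mem_support_iff.mpr hc)
    rw [h, sum_two, Finsupp.add_apply, Finsupp.add_apply] at this
    fin_cases i <;> simp [Finsupp.single_apply] at this
  rw [this, mul_zero]

noncomputable def comp (u v : ℝ) (q : MvPolynomial (Fin 2) ℝ) : Polynomial ℝ :=
  MvPolynomial.aeval ![Polynomial.C u * Polynomial.X, Polynomial.C v * Polynomial.X] q

lemma comp_eq_sum (u v : ℝ) (q : MvPolynomial (Fin 2) ℝ) :
    comp u v q = ∑ e ∈ q.support,
      Polynomial.C (coeff e q * u ^ e 0 * v ^ e 1) * Polynomial.X ^ (e 0 + e 1) := by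
  rw [comp]
  conv_lhs => rw [q.as_sum]
  rw [map_sum]
  refine Finset.sum_congr rfl fun e _ => ?_
  rw [MvPolynomial.aeval_monomial, Finsupp.prod_fintype _ _ (fun i => pow_zero _),
    Fin.prod_univ_two]
  simp only [Matrix.cons_val_zero, Matrix.cons_val_one, Matrix.head_cons]
  rw [show (algebraMap ℝ (Polynomial ℝ)) (coeff e q) = Polynomial.C (coeff e q) from rfl]
  simp only [map_mul, map_pow]
  ring

lemma comp_eval (u v t : ℝ) (q : MvPolynomial (Fin 2) ℝ) :
    (comp u v q).eval t = ev q (t * u) (t * v) := by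
  rw [comp_eq_sum, Polynomial.eval_finset_sum, ev, eval_eq']
  refine Finset.sum_congr rfl fun e _ => ?_
  simp only [Polynomial.eval_mul, Polynomial.eval_C, Polynomial.eval_pow, Polynomial.eval_X,
    Fin.prod_univ_two, Matrix.cons_val_zero, Matrix.cons_val_one, Matrix.head_cons]
  ring

lemma comp_natDegree_le (u v : ℝ) (q : MvPolynomial (Fin 2) ℝ) :
    (comp u v q).natDegree ≤ q.totalDegree := by
  rw [comp_eq_sum]
  apply Polynomial.natDegree_sum_le_of_forall_le
  intro e he
  refine (Polynomial.natDegree_C_mul_le _ _).trans ?_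
  rw [Polynomial.natDegree_X_pow]
  have := MvPolynomial.le_totalDegree he
  rwa [sum_two] at this

lemma comp_coeff (u v : ℝ) (n : ℕ) (q : MvPolynomial (Fin 2) ℝ) :
    (comp u v q).coeff n = ev (homogeneousComponent n q) u v := by
  rw [comp_eq_sum, Polynomial.finset_sum_coeff, ev, homogeneousComponent_apply, map_sum]
  rw [Finset.sum_filter]
  refine Finset.sum_congr rfl fun e _ => ?_
  rw [Polynomial.coeff_C_mul, Polynomial.coeff_X_pow, MvPolynomial.eval_monomial,
    Finsupp.prod_fintype _ _ (fun i => pow_zero _), Fin.prod_univ_two, degree_two]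
  simp only [Matrix.cons_val_zero, Matrix.cons_val_one, Matrix.head_cons]
  by_cases h : e 0 + e 1 = n
  · rw [if_pos h, if_pos h.symm, mul_one]
    ring
  · rw [if_neg h, if_neg (Ne.symm h), mul_zero]

lemma exists_ev_ne_zero {q : MvPolynomial (Fin 2) ℝ} (h : q ≠ 0) :
    ∃ u v : ℝ, ev q u v ≠ 0 := by
  by_contra hc
  push_neg at hc
  apply h
  apply MvPolynomial.funext
  intro x
  have hx : ![x 0, x 1] = x := by
    funext i; fin_cases i <;> rfl
  have := hc (x 0) (x 1)
  rw [ev, hx] at this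
  simpa using this

lemma component_ne_zero (p : MvPolynomial (Fin 2) ℝ) {e : Fin 2 →₀ ℕ} (i : Fin 2)
    (he : coeff e p ≠ 0) (hei : 0 < e i) {n : ℕ} (hsum : e 0 + e 1 = n + 1) :
    homogeneousComponent n (pderiv i p) ≠ 0 := by
  intro hzero
  have hle : Finsupp.single i 1 ≤ e := Finsupp.single_le_iff.mpr hei
  have hcan : (e - Finsupp.single i 1) + Finsupp.single i 1 = e := tsub_add_cancel_of_le hle
  have key := coeff_pderiv i (e - Finsupp.single i 1) p
  rw [hcan] at key
  have h1 : coeff (e - Finsupp.single i 1) (pderiv i p) ≠ 0 := by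
    rw [key]
    exact mul_ne_zero (by positivity) he
  have hdeg : (e - Finsupp.single i 1).degree = n := by
    rw [degree_two, Finsupp.tsub_apply, Finsupp.tsub_apply]
    fin_cases i <;> simp [Finsupp.single_apply] at hei ⊢ <;> omega
  have h2 := coeff_homogeneousComponent n (pderiv i p) (e - Finsupp.single i 1)
  rw [hzero, MvPolynomial.coeff_zero, if_pos hdeg] at h2
  exact h1 h2.symm

lemma coeff_mul_self (P : Polynomial ℝ) (n : ℕ) (h : P.natDegree ≤ n) :
    (P * P).coeff (n + n) = P.coeff n * P.coeff n := by
  rw [Polynomial.coeff_mul]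
  rw [Finset.sum_eq_single ((n, n) : ℕ × ℕ)]
  · rintro ⟨a, b⟩ hab hne
    rw [Finset.HasAntidiagonal.mem_antidiagonal] at hab
    have hne' : a ≠ n ∨ b ≠ n := by
      by_contra hc
      push_neg at hc
      exact hne (Prod.ext hc.1 hc.2)
    rcases lt_or_ge n a with hlt | hle
    · rw [Polynomial.coeff_eq_zero_of_natDegree_lt (lt_of_le_of_lt h hlt), zero_mul]
    · have hb : n < b := by omega
      rw [Polynomial.coeff_eq_zero_of_natDegree_lt (lt_of_le_of_lt h hb), mul_zero]
  · intro h'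
    simp [Finset.mem_antidiagonal] at h'

noncomputable def NUMP (A B L M N : Polynomial ℝ) : Polynomial ℝ :=
  ((1 + B ^ 2) * L - Polynomial.C 2 * A * B * M + (1 + A ^ 2) * N) ^ 2
    - Polynomial.C 4 * (1 + A ^ 2 + B ^ 2) * (L * N - M ^ 2)

noncomputable def DENP (A B : Polynomial ℝ) : Polynomial ℝ :=
  (1 + A ^ 2 + B ^ 2) ^ 3

lemma one_add_sq_add_sq_natDegree_le (A B : Polynomial ℝ) (k : ℕ)
    (hA : A.natDegree ≤ k) (hB : B.natDegree ≤ k) :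
    (1 + A ^ 2 + B ^ 2).natDegree ≤ k + k := by
  have hA2 : (A ^ 2).natDegree ≤ k + k := Polynomial.natDegree_pow_le.trans (by omega)
  have hB2 : (B ^ 2).natDegree ≤ k + k := Polynomial.natDegree_pow_le.trans (by omega)
  refine (Polynomial.natDegree_add_le _ _).trans (max_le ?_ hB2)
  refine (Polynomial.natDegree_add_le _ _).trans (max_le ?_ hA2)
  simp

lemma NUMP_natDegree_le (A B L M N : Polynomial ℝ) (k : ℕ)
    (hA : A.natDegree ≤ k + 1) (hB : B.natDegree ≤ k + 1)
    (hL : L.natDegree ≤ k) (hM : M.natDegree ≤ k) (hN : N.natDegree ≤ k) :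
    (NUMP A B L M N).natDegree ≤ 6 * k + 4 := by
  have hG : (1 + A ^ 2 + B ^ 2).natDegree ≤ (k + 1) + (k + 1) :=
    one_add_sq_add_sq_natDegree_le A B (k + 1) hA hB
  have h1B : (1 + B ^ 2).natDegree ≤ (k + 1) + (k + 1) := by
    have hB2 : (B ^ 2).natDegree ≤ (k + 1) + (k + 1) := Polynomial.natDegree_pow_le.trans (by omega)
    refine (Polynomial.natDegree_add_le _ _).trans (max_le ?_ hB2)
    simp
  have h1A : (1 + A ^ 2).natDegree ≤ (k + 1) + (k + 1) := by
    have hA2 : (A ^ 2).natDegree ≤ (k + 1) + (k + 1) := Polynomial.natDegree_pow_le.trans (by omega)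
    refine (Polynomial.natDegree_add_le _ _).trans (max_le ?_ hA2)
    simp
  have t1 : ((1 + B ^ 2) * L).natDegree ≤ 3 * k + 2 :=
    Polynomial.natDegree_mul_le.trans (by omega)
  have t2a : (Polynomial.C 2 * A).natDegree ≤ k + 1 :=
    (Polynomial.natDegree_C_mul_le _ _).trans hA
  have t2b : (Polynomial.C 2 * A * B).natDegree ≤ 2 * k + 2 :=
    Polynomial.natDegree_mul_le.trans (by omega)
  have t2 : (Polynomial.C 2 * A * B * M).natDegree ≤ 3 * k + 2 :=
    Polynomial.natDegree_mul_le.trans (by omega)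
  have t3 : ((1 + A ^ 2) * N).natDegree ≤ 3 * k + 2 :=
    Polynomial.natDegree_mul_le.trans (by omega)
  have tsum : ((1 + B ^ 2) * L - Polynomial.C 2 * A * B * M
      + (1 + A ^ 2) * N).natDegree ≤ 3 * k + 2 :=
    (Polynomial.natDegree_add_le _ _).trans
      (max_le ((Polynomial.natDegree_sub_le _ _).trans (max_le t1 t2)) t3)
  have tsq : (((1 + B ^ 2) * L - Polynomial.C 2 * A * B * M
      + (1 + A ^ 2) * N) ^ 2).natDegree ≤ 6 * k + 4 :=
    Polynomial.natDegree_pow_le.trans (by omega)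
  have u1 : (L * N).natDegree ≤ k + k := Polynomial.natDegree_mul_le.trans (by omega)
  have u2 : (M ^ 2).natDegree ≤ k + k := Polynomial.natDegree_pow_le.trans (by omega)
  have u3 : (L * N - M ^ 2).natDegree ≤ k + k :=
    (Polynomial.natDegree_sub_le _ _).trans (max_le u1 u2)
  have u4 : (Polynomial.C 4 * (1 + A ^ 2 + B ^ 2)).natDegree ≤ (k + 1) + (k + 1) :=
    (Polynomial.natDegree_C_mul_le _ _).trans hG
  have u5 : (Polynomial.C 4 * (1 + A ^ 2 + B ^ 2) * (L * N - M ^ 2)).natDegree ≤ 6 * k + 4 :=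
    Polynomial.natDegree_mul_le.trans (by omega)
  exact (Polynomial.natDegree_sub_le _ _).trans (max_le tsq u5)

lemma DENP_degree (A B : Polynomial ℝ) (k : ℕ)
    (hA : A.natDegree ≤ k) (hB : B.natDegree ≤ k)
    (hk : k ≠ 0) (hne : A.coeff k ≠ 0 ∨ B.coeff k ≠ 0) :
    (DENP A B).degree = ((6 * k : ℕ) : WithBot ℕ) := by
  set G : Polynomial ℝ := 1 + A ^ 2 + B ^ 2 with hGdef
  have hGcoeff : G.coeff (k + k) = A.coeff k * A.coeff k + B.coeff k * B.coeff k := by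
    have h1 : (1 : Polynomial ℝ).coeff (k + k) = 0 := by
      rw [Polynomial.coeff_one, if_neg (by omega)]
    rw [hGdef, Polynomial.coeff_add, Polynomial.coeff_add, h1, sq, sq,
      coeff_mul_self A k hA, coeff_mul_self B k hB, zero_add]
  have hGpos : 0 < G.coeff (k + k) := by
    rw [hGcoeff]
    rcases hne with h | h
    · have := mul_self_pos.mpr h
      nlinarith [mul_self_nonneg (B.coeff k)]
    · have := mul_self_pos.mpr h
      nlinarith [mul_self_nonneg (A.coeff k)]
  have hGnat : G.natDegree = k + k :=
    le_antisymm (one_add_sq_add_sq_natDegree_le A B k hA hB)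
      (Polynomial.le_natDegree_of_ne_zero (ne_of_gt hGpos))
  have hG0 : G ≠ 0 := by
    intro h; rw [h] at hGpos; simp at hGpos
  have hD0 : (DENP A B) ≠ 0 := pow_ne_zero _ hG0
  rw [DENP, ← hGdef, Polynomial.degree_eq_natDegree (pow_ne_zero _ hG0),
    Polynomial.natDegree_pow, hGnat]
  congr 1
  omega

end Aux


lemma Delta2_nonneg (p : MvPolynomial (Fin 2) ℝ) (x y : ℝ) : 0 ≤ Delta2 p x y := by
  rw [Delta2]
  set a := ev (Dx p) x y
  set b := ev (Dy p) x y
  set L := ev (Dx (Dx p)) x y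
  set M := ev (Dy (Dx p)) x y
  set N := ev (Dy (Dy p)) x y
  apply div_nonneg _ (by positivity)
  have key : (1 + a ^ 2) ^ 2 * (((1 + b ^ 2) * L - 2 * a * b * M + (1 + a ^ 2) * N) ^ 2
      - 4 * (1 + a ^ 2 + b ^ 2) * (L * N - M ^ 2))
      = (2 * (1 + a ^ 2 + b ^ 2) * L
          - (1 + a ^ 2) * ((1 + b ^ 2) * L - 2 * a * b * M + (1 + a ^ 2) * N)) ^ 2
        + 4 * (1 + a ^ 2 + b ^ 2) * ((1 + a ^ 2) * M - a * b * L) ^ 2 := by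
    ring
  have h1 : (0:ℝ) < (1 + a ^ 2) ^ 2 := by positivity
  have h2 : (0:ℝ) ≤ (2 * (1 + a ^ 2 + b ^ 2) * L
          - (1 + a ^ 2) * ((1 + b ^ 2) * L - 2 * a * b * M + (1 + a ^ 2) * N)) ^ 2
        + 4 * (1 + a ^ 2 + b ^ 2) * ((1 + a ^ 2) * M - a * b * L) ^ 2 := by positivity
  nlinarith [key, h1, h2]

lemma Delta2_eq_eval (p : MvPolynomial (Fin 2) ℝ) (u v t : ℝ) :
    Delta2 p (t * u) (t * v)
      = (NUMP (comp u v (Dx p)) (comp u v (Dy p)) (comp u v (Dx (Dx p)))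
          (comp u v (Dy (Dx p))) (comp u v (Dy (Dy p)))).eval t
        / (DENP (comp u v (Dx p)) (comp u v (Dy p))).eval t := by
  rw [Delta2, NUMP, DENP]
  simp only [Polynomial.eval_sub, Polynomial.eval_add, Polynomial.eval_mul, Polynomial.eval_pow,
    Polynomial.eval_one, Polynomial.eval_C, comp_eval]

lemma exists_tendsto (p : MvPolynomial (Fin 2) ℝ) (h2 : 2 ≤ p.totalDegree) :
    ∃ u v : ℝ, Tendsto (fun t => Delta2 p (t * u) (t * v)) atTop (nhds 0) := by
  obtain ⟨m, hm⟩ : ∃ m, p.totalDegree = m + 2 := ⟨p.totalDegree - 2, by omega⟩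
  have hp0 : p ≠ 0 := fun h => by simp [h] at h2
  obtain ⟨e, he, hesum⟩ := Finset.exists_mem_eq_sup p.support
    (MvPolynomial.support_nonempty.mpr hp0) fun s => s.sum fun _ k => k
  have htd : p.totalDegree = e.sum fun _ k => k := hesum
  have hesum' : e 0 + e 1 = (m + 1) + 1 := by
    rw [sum_two] at htd; omega
  have hec : coeff e p ≠ 0 := MvPolynomial.mem_support_iff.mp he
  have hcomp : homogeneousComponent (m + 1) (Dx p) ≠ 0
      ∨ homogeneousComponent (m + 1) (Dy p) ≠ 0 := by
    rcases Nat.eq_zero_or_pos (e 0) with h0 | h0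
    · right; exact component_ne_zero p 1 hec (by omega) hesum'
    · left; exact component_ne_zero p 0 hec h0 hesum'
  have hUV : ∃ u v : ℝ, (comp u v (Dx p)).coeff (m + 1) ≠ 0
      ∨ (comp u v (Dy p)).coeff (m + 1) ≠ 0 := by
    rcases hcomp with h | h
    · obtain ⟨u, v, huv⟩ := exists_ev_ne_zero h
      exact ⟨u, v, Or.inl (by rw [comp_coeff]; exact huv)⟩
    · obtain ⟨u, v, huv⟩ := exists_ev_ne_zero h
      exact ⟨u, v, Or.inr (by rw [comp_coeff]; exact huv)⟩
  obtain ⟨u, v, hAB⟩ := hUV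
  refine ⟨u, v, ?_⟩
  have htdx : (Dx p).totalDegree ≤ m + 1 := totalDegree_pderiv_le 0 p (m + 1) (by omega)
  have htdy : (Dy p).totalDegree ≤ m + 1 := totalDegree_pderiv_le 1 p (m + 1) (by omega)
  have htdxx : (Dx (Dx p)).totalDegree ≤ m := totalDegree_pderiv_le 0 (Dx p) m htdx
  have htdyx : (Dy (Dx p)).totalDegree ≤ m := totalDegree_pderiv_le 1 (Dx p) m htdx
  have htdyy : (Dy (Dy p)).totalDegree ≤ m := totalDegree_pderiv_le 1 (Dy p) m htdy
  have hA : (comp u v (Dx p)).natDegree ≤ m + 1 := (comp_natDegree_le u v _).trans htdx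
  have hB : (comp u v (Dy p)).natDegree ≤ m + 1 := (comp_natDegree_le u v _).trans htdy
  have hL : (comp u v (Dx (Dx p))).natDegree ≤ m := (comp_natDegree_le u v _).trans htdxx
  have hM : (comp u v (Dy (Dx p))).natDegree ≤ m := (comp_natDegree_le u v _).trans htdyx
  have hN : (comp u v (Dy (Dy p))).natDegree ≤ m := (comp_natDegree_le u v _).trans htdyy
  have hNUM : (NUMP (comp u v (Dx p)) (comp u v (Dy p)) (comp u v (Dx (Dx p)))
      (comp u v (Dy (Dx p))) (comp u v (Dy (Dy p)))).natDegree ≤ 6 * m + 4 :=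
    NUMP_natDegree_le _ _ _ _ _ m hA hB hL hM hN
  have hDEN : (DENP (comp u v (Dx p)) (comp u v (Dy p))).degree
      = ((6 * (m + 1) : ℕ) : WithBot ℕ) :=
    DENP_degree _ _ (m + 1) hA hB (by omega) hAB
  have hlt : (NUMP (comp u v (Dx p)) (comp u v (Dy p)) (comp u v (Dx (Dx p)))
      (comp u v (Dy (Dx p))) (comp u v (Dy (Dy p)))).degree
      < (DENP (comp u v (Dx p)) (comp u v (Dy p))).degree := by
    rw [hDEN]
    calc (NUMP (comp u v (Dx p)) (comp u v (Dy p)) (comp u v (Dx (Dx p)))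
        (comp u v (Dy (Dx p))) (comp u v (Dy (Dy p)))).degree
        ≤ ((NUMP (comp u v (Dx p)) (comp u v (Dy p)) (comp u v (Dx (Dx p)))
            (comp u v (Dy (Dx p))) (comp u v (Dy (Dy p)))).natDegree : WithBot ℕ) :=
          Polynomial.degree_le_natDegree
      _ ≤ ((6 * m + 4 : ℕ) : WithBot ℕ) := by exact_mod_cast hNUM
      _ < ((6 * (m + 1) : ℕ) : WithBot ℕ) := by
          exact_mod_cast (by omega : 6 * m + 4 < 6 * (m + 1))
  have htend := Polynomial.div_tendsto_zero_of_degree_lt _ _ hlt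
  have hval : (fun t => Delta2 p (t * u) (t * v))
      = fun t => (NUMP (comp u v (Dx p)) (comp u v (Dy p)) (comp u v (Dx (Dx p)))
          (comp u v (Dy (Dx p))) (comp u v (Dy (Dy p)))).eval t
        / (DENP (comp u v (Dx p)) (comp u v (Dy p))).eval t := by
    funext t
    exact Delta2_eq_eval p u v t
  rw [hval]
  exact htend

lemma exists_small (p : MvPolynomial (Fin 2) ℝ) {ε : ℝ} (hε : 0 < ε) :
    ∃ q : ℝ × ℝ, Delta2 p q.1 q.2 < ε := by
  rcases le_or_gt p.totalDegree 1 with h1 | h1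
  · have htdx : (Dx p).totalDegree = 0 :=
      Nat.le_zero.mp (totalDegree_pderiv_le 0 p 0 (by omega))
    have htdy : (Dy p).totalDegree = 0 :=
      Nat.le_zero.mp (totalDegree_pderiv_le 1 p 0 (by omega))
    have hxx : Dx (Dx p) = 0 := pderiv_eq_zero_of_td 0 (Dx p) htdx
    have hyx : Dy (Dx p) = 0 := pderiv_eq_zero_of_td 1 (Dx p) htdx
    have hyy : Dy (Dy p) = 0 := pderiv_eq_zero_of_td 1 (Dy p) htdy
    refine ⟨(0, 0), ?_⟩
    have hev : ∀ x y : ℝ, ev (0 : MvPolynomial (Fin 2) ℝ) x y = 0 := by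
      intro x y; rw [ev]; simp
    rw [Delta2, hxx, hyx, hyy, hev]
    simpa using hε
  · obtain ⟨u, v, htend⟩ := exists_tendsto p (by omega)
    have := (htend.eventually_lt_const hε).exists
    obtain ⟨t, ht⟩ := this
    exact ⟨(t * u, t * v), ht⟩

/-- Toponogov's condition `inf |κ₁ − κ₂| = 0` holds for every polynomial graph. -/
theorem inf_curvature_diff_eq_zero (p : MvPolynomial (Fin 2) ℝ) :
    ⨅ q : ℝ × ℝ, Delta2 p q.1 q.2 = 0 := by
  have hbdd : BddBelow (Set.range fun q : ℝ × ℝ => Delta2 p q.1 q.2) := by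
    refine ⟨0, ?_⟩
    rintro x ⟨q, rfl⟩
    exact Delta2_nonneg p q.1 q.2
  refine le_antisymm ?_ (le_ciInf fun q => Delta2_nonneg p q.1 q.2)
  by_contra hlt
  push_neg at hlt
  obtain ⟨q, hq⟩ := exists_small p hlt
  exact lt_irrefl _ (lt_of_le_of_lt (ciInf_le hbdd q) hq)
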